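/- If Γ = {γ_{mn}} is a d-regular sequence, then the sum over all (m,n) ∈ ℤ² with (m,n) ≠ (0,0) of (1/|λ_{mn}|) · |d/λ_{mn} − 1/γ_{mn}| is finite. -/

import Mathlib

open Complex MeasureTheory Filter

/-- The integer lattice point `λ_{mn} = m + i n`. -/
noncomputable def latticePt (p : ℤ × ℤ) : ℂ := (p.1 : ℂ) + (p.2 : ℂ) * Complex.I

/-- A sequence `Γ = {γ_{mn}}` is `d`-regular if there are `c > 0` and
`φ : [1,∞) → ℝ` with `φ(t)/t` non-increasing, `∫₁^∞ φ(t)/t² dt < ∞`, such that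
`|λ_{mn} - d γ_{mn}| ≤ φ(|λ_{mn}|)` and `|γ_{mn} - γ_{m'n'}| ≥ c |λ_{mn} - λ_{m'n'}|`. -/
def DRegular (d : ℝ) (γ : ℤ × ℤ → ℂ) : Prop :=
  ∃ c : ℝ, 0 < c ∧ ∃ φ : ℝ → ℝ,
    (∀ s t : ℝ, 1 ≤ s → s ≤ t → φ t / t ≤ φ s / s) ∧
    MeasureTheory.IntegrableOn (fun t : ℝ => φ t / t ^ 2) (Set.Ici 1) ∧
    (∀ p : ℤ × ℤ, ‖latticePt p - (d : ℂ) * γ p‖ ≤ φ ‖latticePt p‖) ∧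
    (∀ p q : ℤ × ℤ, c * ‖latticePt p - latticePt q‖ ≤ ‖γ p - γ q‖)

/-- If a function dominates `e/t` on `(s,∞)` (in norm) and `e > 0`, it is not integrable there. -/
private lemma not_integrable_of_inv_le {g : ℝ → ℝ} {s e : ℝ} (hs : 0 < s) (he : 0 < e)
    (hg : MeasureTheory.IntegrableOn g (Set.Ioi s))
    (h : ∀ t ∈ Set.Ioi s, e * t⁻¹ ≤ ‖g t‖) : False := by
  have hint : MeasureTheory.IntegrableOn (fun t : ℝ => e * t⁻¹) (Set.Ioi s) := by
    refine MeasureTheory.Integrable.mono hg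
      ((measurable_const.mul measurable_inv).aestronglyMeasurable) ?_
    filter_upwards [ae_restrict_mem measurableSet_Ioi] with t ht
    have ht' : 0 < t := hs.trans ht
    have h1 : e * t⁻¹ ≤ ‖g t‖ := h t ht
    have h2 : ‖e * t⁻¹‖ = e * t⁻¹ := by
      rw [Real.norm_eq_abs]
      exact _root_.abs_of_nonneg (by positivity)
    rw [h2]; exact h1
  have hinv : MeasureTheory.IntegrableOn (fun t : ℝ => t⁻¹) (Set.Ioi s) := by
    have h2 := hint.const_mul e⁻¹
    refine MeasureTheory.IntegrableOn.congr_fun h2 (fun t ht => ?_) measurableSet_Ioi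
    field_simp
  exact not_IntegrableOn_Ioi_inv hinv

private lemma psi_nonneg {φ : ℝ → ℝ}
    (hmono : ∀ s t : ℝ, 1 ≤ s → s ≤ t → φ t / t ≤ φ s / s)
    (hint : MeasureTheory.IntegrableOn (fun t : ℝ => φ t / t ^ 2) (Set.Ici 1)) :
    ∀ s : ℝ, 1 ≤ s → 0 ≤ φ s / s := by
  intro s hs
  by_contra hneg
  push_neg at hneg
  refine not_integrable_of_inv_le (s := s) (e := -(φ s / s)) (by linarith) (by linarith)
    (hint.mono_set (fun t ht => hs.trans (le_of_lt ht))) ?_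
  intro t ht
  have hts : s < t := ht
  have ht0 : 0 < t := by linarith
  have h1 : φ t / t ≤ φ s / s := hmono s t hs hts.le
  have h2 : φ t / t ^ 2 = (φ t / t) * t⁻¹ := by
    rw [sq, ← div_div, div_eq_mul_inv]
  have h3 : φ t / t ^ 2 ≤ (φ s / s) * t⁻¹ := by
    rw [h2]
    exact mul_le_mul_of_nonneg_right h1 (by positivity)
  have h4 : -(φ s / s) * t⁻¹ ≤ -(φ t / t ^ 2) := by nlinarith [inv_pos.mpr ht0]
  calc -(φ s / s) * t⁻¹ ≤ -(φ t / t ^ 2) := h4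
    _ ≤ ‖φ t / t ^ 2‖ := neg_le_abs _

private lemma exists_threshold {φ : ℝ → ℝ}
    (hmono : ∀ s t : ℝ, 1 ≤ s → s ≤ t → φ t / t ≤ φ s / s)
    (hint : MeasureTheory.IntegrableOn (fun t : ℝ => φ t / t ^ 2) (Set.Ici 1)) :
    ∃ T : ℕ, 2 ≤ T ∧ φ T / T ≤ 1 / 2 := by
  by_contra h
  push_neg at h
  refine not_integrable_of_inv_le (s := 1) (e := 1 / 2) one_pos (by norm_num)
    (hint.mono_set (fun t ht => Set.mem_Ici.mpr (le_of_lt ht))) ?_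
  intro t ht
  have ht1 : (1 : ℝ) < t := ht
  have ht0 : 0 < t := by linarith
  set k : ℕ := ⌈t⌉₊ + 2 with hk
  have hk2 : 2 ≤ k := by omega
  have htk : t ≤ (k : ℝ) := by
    have := Nat.le_ceil t
    push_cast [hk]
    linarith
  have h1 : (1 : ℝ) / 2 ≤ φ t / t := le_trans (h k hk2).le (hmono t k ht1.le htk)
  have h2 : φ t / t ^ 2 = (φ t / t) * t⁻¹ := by
    rw [sq, ← div_div, div_eq_mul_inv]
  have h3 : (1 / 2 : ℝ) * t⁻¹ ≤ φ t / t ^ 2 := by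
    rw [h2]
    exact mul_le_mul_of_nonneg_right h1 (by positivity)
  exact h3.trans (le_abs_self _)

private lemma summable_psi_div {φ : ℝ → ℝ}
    (hmono : ∀ s t : ℝ, 1 ≤ s → s ≤ t → φ t / t ≤ φ s / s)
    (hint : MeasureTheory.IntegrableOn (fun t : ℝ => φ t / t ^ 2) (Set.Ici 1)) :
    Summable (fun k : ℕ => φ ((k : ℝ) + 2) / ((k : ℝ) + 2) / ((k : ℝ) + 2)) := by
  have hnn := psi_nonneg hmono hint
  have hnn' : ∀ t : ℝ, 1 ≤ t → 0 ≤ φ t / t ^ 2 := by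
    intro t ht
    have h2 : φ t / t ^ 2 = (φ t / t) * t⁻¹ := by rw [sq, ← div_div, div_eq_mul_inv]
    rw [h2]
    have := hnn t ht
    positivity
  have hIoc : ∀ K : ℕ, MeasureTheory.IntegrableOn (fun t : ℝ => φ t / t ^ 2)
      (Set.Ioc (1 : ℝ) (K + 1)) := fun K =>
    hint.mono_set (fun t ht => le_of_lt ht.1)
  have key : ∀ K : ℕ, ∑ k ∈ Finset.range K, φ ((k : ℝ) + 2) / ((k : ℝ) + 2) / ((k : ℝ) + 2)
      ≤ ∫ t in Set.Ioc (1 : ℝ) (K + 1), φ t / t ^ 2 := by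
    intro K
    induction K with
    | zero => simp
    | succ K ih =>
      rw [Finset.sum_range_succ]
      have hsplit : Set.Ioc (1 : ℝ) ((K + 1 : ℕ) + 1) =
          Set.Ioc (1 : ℝ) (K + 1) ∪ Set.Ioc ((K : ℝ) + 1) ((K : ℝ) + 2) := by
        rw [Set.Ioc_union_Ioc_eq_Ioc
          (by have : (0:ℝ) ≤ (K:ℝ) := Nat.cast_nonneg K; linarith)
          (by have : (0:ℝ) ≤ (K:ℝ) := Nat.cast_nonneg K; linarith)]
        push_cast
        ring_nf
      have hdisj : Disjoint (Set.Ioc (1 : ℝ) (K + 1)) (Set.Ioc ((K : ℝ) + 1) ((K : ℝ) + 2)) :=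
        Set.Ioc_disjoint_Ioc_of_le le_rfl
      have hi1 := hIoc K
      have hi2 : MeasureTheory.IntegrableOn (fun t : ℝ => φ t / t ^ 2)
          (Set.Ioc ((K : ℝ) + 1) ((K : ℝ) + 2)) :=
        hint.mono_set (fun t ht => by
          have := ht.1
          simp only [Set.mem_Ici]
          have : (0:ℝ) ≤ (K:ℝ) := Nat.cast_nonneg K
          linarith [ht.1])
      have hstep : φ ((K : ℝ) + 2) / ((K : ℝ) + 2) / ((K : ℝ) + 2)
          ≤ ∫ t in Set.Ioc ((K : ℝ) + 1) ((K : ℝ) + 2), φ t / t ^ 2 := by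
        have hconst : ∫ _ in Set.Ioc ((K : ℝ) + 1) ((K : ℝ) + 2),
            (φ ((K : ℝ) + 2) / ((K : ℝ) + 2) / ((K : ℝ) + 2)) =
            φ ((K : ℝ) + 2) / ((K : ℝ) + 2) / ((K : ℝ) + 2) := by
          rw [MeasureTheory.setIntegral_const]
          rw [Real.volume_real_Ioc, show (K : ℝ) + 2 - (K + 1) = 1 by ring]
          norm_num
        rw [← hconst]
        refine MeasureTheory.setIntegral_mono_on
          (MeasureTheory.integrableOn_const (by simp [Real.volume_Ioc]))
          hi2 measurableSet_Ioc ?_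
        intro t ht
        have ht1 : (K : ℝ) + 1 < t := ht.1
        have ht2 : t ≤ (K : ℝ) + 2 := ht.2
        have ht1' : (1 : ℝ) ≤ t := by
          have : (0:ℝ) ≤ (K:ℝ) := Nat.cast_nonneg K
          linarith
        have ht0 : 0 < t := by linarith
        have hm : φ ((K : ℝ) + 2) / ((K : ℝ) + 2) ≤ φ t / t := hmono t ((K : ℝ) + 2) ht1' ht2
        have hnnK : 0 ≤ φ ((K : ℝ) + 2) / ((K : ℝ) + 2) :=
          hnn _ (by have : (0:ℝ) ≤ (K:ℝ) := Nat.cast_nonneg K; linarith)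
        have h2 : φ t / t ^ 2 = (φ t / t) * t⁻¹ := by rw [sq, ← div_div, div_eq_mul_inv]
        rw [h2]
        calc φ ((K : ℝ) + 2) / ((K : ℝ) + 2) / ((K : ℝ) + 2)
            = (φ ((K : ℝ) + 2) / ((K : ℝ) + 2)) * ((K : ℝ) + 2)⁻¹ := by
              rw [div_eq_mul_inv]
          _ ≤ (φ t / t) * t⁻¹ := by
              apply mul_le_mul hm _ (by positivity) ((hnnK.trans hm))
              exact inv_anti₀ ht0 ht2
      have hun : ∫ t in Set.Ioc (1 : ℝ) ((K + 1 : ℕ) + 1), φ t / t ^ 2 =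
          (∫ t in Set.Ioc (1 : ℝ) (K + 1), φ t / t ^ 2) +
          ∫ t in Set.Ioc ((K : ℝ) + 1) ((K : ℝ) + 2), φ t / t ^ 2 := by
        rw [hsplit]
        exact MeasureTheory.setIntegral_union hdisj measurableSet_Ioc hi1 hi2
      rw [hun]
      push_cast
      push_cast at ih
      linarith [hstep]
  have hbound : ∀ K : ℕ, ∑ k ∈ Finset.range K, φ ((k : ℝ) + 2) / ((k : ℝ) + 2) / ((k : ℝ) + 2)
      ≤ ∫ t in Set.Ici (1 : ℝ), φ t / t ^ 2 := by
    intro K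
    refine (key K).trans ?_
    refine MeasureTheory.setIntegral_mono_set hint ?_ ?_
    · filter_upwards [ae_restrict_mem measurableSet_Ici] with t ht using hnn' t ht
    · exact HasSubset.Subset.eventuallyLE (fun t ht => le_of_lt ht.1)
  refine summable_of_sum_range_le (fun k => ?_) hbound
  have h1 := hnn ((k : ℝ) + 2) (by have : (0:ℝ) ≤ (k:ℝ) := Nat.cast_nonneg k; linarith)
  have h2 : (0:ℝ) < (k:ℝ) + 2 := by have : (0:ℝ) ≤ (k:ℝ) := Nat.cast_nonneg k; linarith
  positivity

private lemma abs_latticePt_ge (p : ℤ × ℤ) :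
    ((max p.1.natAbs p.2.natAbs : ℕ) : ℝ) ≤ ‖latticePt p‖ := by
  have hre : (latticePt p).re = (p.1 : ℝ) := by simp [latticePt]
  have him : (latticePt p).im = (p.2 : ℝ) := by simp [latticePt]
  have h1 : |(p.1 : ℝ)| ≤ ‖latticePt p‖ := by
    have := Complex.abs_re_le_norm (latticePt p); rwa [hre] at this
  have h2 : |(p.2 : ℝ)| ≤ ‖latticePt p‖ := by
    have := Complex.abs_im_le_norm (latticePt p); rwa [him] at this
  rw [Nat.cast_max]
  refine max_le ?_ ?_ <;> simp only [Nat.cast_natAbs] <;> push_cast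
  · exact h1
  · exact h2

private lemma key_bound {d : ℝ} (hd : 0 < d) {γ : ℤ × ℤ → ℂ} {φ : ℝ → ℝ}
    (hmono : ∀ s t : ℝ, 1 ≤ s → s ≤ t → φ t / t ≤ φ s / s)
    (hnn : ∀ s : ℝ, 1 ≤ s → 0 ≤ φ s / s)
    (hbound : ∀ p : ℤ × ℤ,
      ‖latticePt p - (d : ℂ) * γ p‖ ≤ φ ‖latticePt p‖)
    {T : ℕ} (hT2 : 2 ≤ T) (hT : φ T / T ≤ 1 / 2)
    {N : ℝ} (hTN : (T : ℝ) ≤ N) {p : ℤ × ℤ}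
    (hpN : N ≤ ‖latticePt p‖) :
    (1 / ‖latticePt p‖) * ‖(d : ℂ) / latticePt p - 1 / γ p‖
      ≤ 2 * d * (φ N / N / N ^ 2) := by
  have hT1 : (1 : ℝ) ≤ (T : ℝ) := by exact_mod_cast Nat.one_le_of_lt hT2
  have hN1 : (1 : ℝ) ≤ N := hT1.trans hTN
  set a := ‖latticePt p‖ with ha
  have ha1 : (1 : ℝ) ≤ a := hN1.trans hpN
  have ha0 : 0 < a := by linarith
  have hlam : latticePt p ≠ 0 := by
    intro h
    rw [ha, h, norm_zero] at ha0
    exact lt_irrefl _ ha0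
  -- φ a / a ≤ 1/2
  have hψa : φ a / a ≤ 1 / 2 := le_trans (hmono (T : ℝ) a hT1 (hTN.trans hpN)) hT
  have hφa_nn : 0 ≤ φ a := by
    have h := mul_nonneg (hnn a ha1) ha0.le
    rwa [div_mul_cancel₀ _ ha0.ne'] at h
  have hφa : φ a ≤ a / 2 := by
    have := (div_le_iff₀ ha0).mp hψa
    linarith
  -- lower bound on |γ p|
  set g := ‖γ p‖ with hg
  have hdg : ‖(d : ℂ) * γ p‖ = d * g := by
    rw [norm_mul, Complex.norm_real, Real.norm_of_nonneg hd.le]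
  have hγlow : a / 2 ≤ d * g := by
    have h1 : a ≤ ‖latticePt p - (d : ℂ) * γ p‖ + ‖(d : ℂ) * γ p‖ := by
      calc a = ‖(latticePt p - (d : ℂ) * γ p) + (d : ℂ) * γ p‖ := by
            rw [ha]; congr 1; ring
        _ ≤ _ := norm_add_le _ _
    have h2 := hbound p
    rw [hdg] at h1
    rw [← ha] at h2
    linarith
  have hg0 : 0 < g := by nlinarith
  have hgam : γ p ≠ 0 := by
    intro h
    rw [hg, h, norm_zero] at hg0
    exact lt_irrefl _ hg0
  have hga : a / (2 * d) ≤ g := by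
    rw [div_le_iff₀ (by positivity)]
    linarith
  -- algebraic identity
  have hid : (d : ℂ) / latticePt p - 1 / γ p
      = ((d : ℂ) * γ p - latticePt p) / (latticePt p * γ p) := by
    field_simp
  have habs : ‖(d : ℂ) / latticePt p - 1 / γ p‖
      = ‖latticePt p - (d : ℂ) * γ p‖ / (a * g) := by
    rw [hid, norm_div, norm_mul, ← ha, ← hg, ← norm_neg, neg_sub]
  set X := ‖latticePt p - (d : ℂ) * γ p‖ with hX
  have hX0 : 0 ≤ X := norm_nonneg _
  have hXφ : X ≤ φ a := hbound p
  rw [habs]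
  clear_value X a g
  have e1 : (1 / a) * (X / (a * g)) = X / (a ^ 2 * g) := by
    rw [div_mul_div_comm, one_mul, sq, mul_assoc]
  rw [e1]
  have c1 : X / (a ^ 2 * g) ≤ φ a / (a ^ 2 * g) := by
    gcongr
  have c2 : φ a / (a ^ 2 * g) ≤ φ a / (a ^ 2 * (a / (2 * d))) := by
    gcongr
  have c3 : φ a / (a ^ 2 * (a / (2 * d))) = 2 * d * ((φ a / a) / a ^ 2) := by
    field_simp
  have c4 : 2 * d * ((φ a / a) / a ^ 2) ≤ 2 * d * ((φ N / N) / N ^ 2) := by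
    have hm : φ a / a ≤ φ N / N := hmono N a hN1 hpN
    have hnnN : 0 ≤ φ N / N := hnn N hN1
    gcongr
  calc X / (a ^ 2 * g) ≤ φ a / (a ^ 2 * g) := c1
    _ ≤ φ a / (a ^ 2 * (a / (2 * d))) := c2
    _ = 2 * d * ((φ a / a) / a ^ 2) := c3
    _ ≤ 2 * d * (φ N / N / N ^ 2) := c4

/-- Lemma 2.1(b): Σ'_{m,n} (1/|λ_{mn}|)·|d/λ_{mn} − 1/γ_{mn}| < ∞. -/
theorem dRegular_summable (d : ℝ) (hd : 0 < d) (γ : ℤ × ℤ → ℂ) (hΓ : DRegular d γ) :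
    Summable (fun p : {q : ℤ × ℤ // q ≠ (0, 0)} =>
      (1 / ‖latticePt p.1‖) *
        ‖(d : ℂ) / latticePt p.1 - 1 / γ p.1‖) := by
  obtain ⟨c, hc, φ, hmono, hint, hbound, hsep⟩ := hΓ
  have hnn := psi_nonneg hmono hint
  obtain ⟨T, hT2, hT⟩ := exists_threshold hmono hint
  set f : ℤ × ℤ → ℝ := fun p =>
    (1 / ‖latticePt p‖) * ‖(d : ℂ) / latticePt p - 1 / γ p‖ with hf
  have hf0 : ∀ p, 0 ≤ f p := by
    intro p
    have := norm_nonneg ((d : ℂ) / latticePt p - 1 / γ p)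
    have := norm_nonneg (latticePt p)
    positivity
  set F : ℤ × ℤ → ℝ := Set.indicator {q : ℤ × ℤ | q ≠ (0, 0)} f with hF
  have hF0 : ∀ p, 0 ≤ F p := fun p => Set.indicator_nonneg (fun q _ => hf0 q) p
  have hFf : ∀ p, F p ≤ f p := fun p => Set.indicator_le_self' (fun q _ => hf0 q) p
  suffices h : Summable F by
    exact summable_subtype_iff_indicator.mpr h
  refine (summable_partition (f := F)
      (s := fun n : ℕ => ((Finset.box n : Finset (ℤ × ℤ)) : Set (ℤ × ℤ)))
      (fun p => hF0 p)
      (fun i => by simpa using Int.existsUnique_mem_box i)).mpr ⟨?_, ?_⟩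
  · exact fun n => (hasSum_fintype _).summable
  · -- outer sum over boxes
    refine (summable_nat_add_iff T).mp ?_
    have hmajsum : Summable (fun n : ℕ =>
        16 * d * (φ (((n + T : ℕ) : ℝ)) / ((n + T : ℕ) : ℝ) / ((n + T : ℕ) : ℝ))) := by
      have h0 := summable_psi_div hmono hint
      have h1 := (summable_nat_add_iff (T - 2)).mpr h0
      refine ((h1.mul_left (16 * d)).congr ?_)
      intro k
      have hcast : ((k + (T - 2) : ℕ) : ℝ) + 2 = ((k + T : ℕ) : ℝ) := by
        have : k + (T - 2) + 2 = k + T := by omega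
        rw [← this]
        push_cast
        ring
      rw [hcast]
    refine Summable.of_nonneg_of_le (fun n => tsum_nonneg (fun p => hF0 p)) (fun n => ?_) hmajsum
    -- bound the sum over box (n+T)
    set m : ℕ := n + T with hm
    have hm2 : 2 ≤ m := by omega
    have hm0 : (0 : ℝ) < (m : ℝ) := by positivity
    rw [Finset.tsum_subtype' (Finset.box m) F]
    have hTm : (T : ℝ) ≤ (m : ℝ) := by exact_mod_cast Nat.le_add_left T n
    have hterm : ∀ p ∈ (Finset.box m : Finset (ℤ × ℤ)),
        F p ≤ 2 * d * (φ (m : ℝ) / (m : ℝ) / (m : ℝ) ^ 2) := by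
      intro p hp
      have hpbox : max p.1.natAbs p.2.natAbs = m := Int.mem_box.mp hp
      have hpabs : (m : ℝ) ≤ ‖latticePt p‖ := by
        rw [← hpbox]
        exact abs_latticePt_ge p
      calc F p ≤ f p := hFf p
        _ ≤ 2 * d * (φ (m : ℝ) / (m : ℝ) / (m : ℝ) ^ 2) :=
          key_bound hd hmono hnn hbound hT2 hT hTm hpabs
    calc (∑ p ∈ Finset.box m, F p)
        ≤ (Finset.box m : Finset (ℤ × ℤ)).card •
            (2 * d * (φ (m : ℝ) / (m : ℝ) / (m : ℝ) ^ 2)) :=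
          Finset.sum_le_card_nsmul _ _ _ hterm
      _ = ((8 * m : ℕ) : ℝ) * (2 * d * (φ (m : ℝ) / (m : ℝ) / (m : ℝ) ^ 2)) := by
          rw [Int.card_box (by omega : m ≠ 0), nsmul_eq_mul]
      _ = 16 * d * (φ (m : ℝ) / (m : ℝ) / (m : ℝ)) := by
          have hgen : ∀ x NN : ℝ, NN ≠ 0 →
              (((8 * NN)) * (2 * d * (x / NN ^ 2))) = 16 * d * (x / NN) := by
            intro x NN h
            field_simp
            ring
          push_cast
          exact hgen (φ (m : ℝ) / (m : ℝ)) (m : ℝ) hm0.ne'
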